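/- arXiv:2011.05085 — 3 statements merged into one kernel-verified Lean document; each statement's English description precedes it below -/
import Mathlib

section
/- Let k ∈ ℕ and let B be the 3k×2k real matrix consisting of 2·I_{2k} stacked on top of −2·(I_k ⊗ [1 1]). Let A₁, A₂ be 3k×2k matrices with A₁, A₂ ≥ 0 entrywise, satisfying the partner property A₂(i, 2j−1) = A₂(i, 2j) for all i ∈ [3k], j ∈ [k], and such that every row of A₁ + A₂/2 sums to at most 1. Then the matrix B + A₁ − A₂ has rank 2k (its columns are linearly independent). -/
/-- The matrix `B` of the direct-union lower bound: `2·I_{2k}` stacked on top of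
`−2·(I_k ⊗ [1 1])`. -/
def Bmat (k : ℕ) : Matrix (Fin (3 * k)) (Fin (2 * k)) ℝ :=
  Matrix.of fun i j =>
    if (i : ℕ) < 2 * k then (if (j : ℕ) = (i : ℕ) then 2 else 0)
    else (if (j : ℕ) / 2 = (i : ℕ) - 2 * k then -2 else 0)

/-- Partner swap within pairs. -/
def sig (k : ℕ) (j : Fin (2 * k)) : Fin (2 * k) :=
  ⟨if (j : ℕ) % 2 = 0 then (j : ℕ) + 1 else (j : ℕ) - 1, by
    have := j.isLt; split <;> omega⟩

lemma sig_div (k : ℕ) (j : Fin (2 * k)) : ((sig k j : ℕ)) / 2 = (j : ℕ) / 2 := by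
  simp only [sig]; split <;> omega

lemma sig_ne (k : ℕ) (j : Fin (2 * k)) : j ≠ sig k j := by
  intro h
  have := congrArg Fin.val h
  simp only [sig] at this; split at this <;> omega

lemma sig_invol (k : ℕ) : Function.Involutive (sig k) := by
  intro j
  apply Fin.ext
  simp only [sig]
  split <;> split <;> omega

lemma filter_pair (k : ℕ) (j : Fin (2 * k)) :
    Finset.univ.filter (fun j' : Fin (2 * k) => (j' : ℕ) / 2 = (j : ℕ) / 2)
      = {j, sig k j} := by
  ext j'
  simp only [Finset.mem_filter, Finset.mem_univ, true_and, Finset.mem_insert,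
    Finset.mem_singleton, Fin.ext_iff, sig]
  have := j.isLt; have := j'.isLt
  constructor
  · intro h; split <;> omega
  · intro h; rcases h with h | h
    · omega
    · split at h <;> omega

/-- For entrywise nonnegative `A₁, A₂` with the partner property on `A₂` and each row of
`A₁ + A₂/2` summing to at most `1`, the matrix `B + A₁ − A₂` has rank `2k`. -/
theorem stmt15 (k : ℕ) (A₁ A₂ : Matrix (Fin (3 * k)) (Fin (2 * k)) ℝ)
    (h1 : ∀ i j, 0 ≤ A₁ i j) (h2 : ∀ i j, 0 ≤ A₂ i j)
    (hpartner : ∀ i, ∀ j j' : Fin (2 * k), (j : ℕ) / 2 = (j' : ℕ) / 2 → A₂ i j = A₂ i j')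
    (hrow : ∀ i, ∑ j, (A₁ i j + A₂ i j / 2) ≤ 1) :
    (Bmat k + A₁ - A₂).rank = 2 * k := by
  classical
  set M := Bmat k + A₁ - A₂ with hMdef
  have hinj : Function.Injective M.mulVecLin := by
    rw [← LinearMap.ker_eq_bot, LinearMap.ker_eq_bot']
    intro x hx
    have hx' : ∀ i, ∑ j, M i j * x j = 0 := by
      intro i
      have := congrFun hx i
      simpa [Matrix.mulVecLin_apply, Matrix.mulVec, dotProduct] using this
    have hMapp : ∀ i j, M i j = Bmat k i j + A₁ i j - A₂ i j := by
      intro i j; simp [hMdef, Matrix.add_apply, Matrix.sub_apply]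
    set S : Fin (2 * k) → ℝ := fun j => x j + x (sig k j) with hSdef
    funext j0
    obtain ⟨j₁, -, hj₁⟩ := Finset.exists_max_image Finset.univ (fun j => |x j|)
      ⟨j0, Finset.mem_univ _⟩
    obtain ⟨j₂, -, hj₂⟩ := Finset.exists_max_image Finset.univ (fun j => |S j|)
      ⟨j0, Finset.mem_univ _⟩
    set c : ℝ := max (|x j₁|) (|S j₂|) with hcdef
    have hc0 : (0 : ℝ) ≤ c := le_trans (abs_nonneg _) (le_max_left _ _)
    have hxc : ∀ j, |x j| ≤ c := fun j =>
      le_trans (hj₁ j (Finset.mem_univ _)) (le_max_left _ _)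
    have hSc : ∀ j, |S j| ≤ c := fun j =>
      le_trans (hj₂ j (Finset.mem_univ _)) (le_max_right _ _)
    -- rewrite the A₂ part of any row sum using pair sums
    have hA2sum : ∀ i, ∑ j, A₂ i j * x j = (∑ j, A₂ i j * S j) / 2 := by
      intro i
      have hswap : ∑ j, A₂ i j * x (sig k j) = ∑ j, A₂ i j * x j := by
        apply Fintype.sum_bijective (sig k) (sig_invol k).bijective
        intro j
        rw [hpartner i (sig k j) j (sig_div k j)]
      have h2S : ∑ j, A₂ i j * S j = 2 * ∑ j, A₂ i j * x j := by
        simp only [hSdef, mul_add, Finset.sum_add_distrib, hswap]; ring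
      linarith
    -- key bound on the perturbation part of each row
    have hkey : ∀ i, |∑ j, (A₁ i j - A₂ i j) * x j| ≤ c := by
      intro i
      have hsplit : ∑ j, (A₁ i j - A₂ i j) * x j
          = ∑ j, (A₁ i j * x j - A₂ i j * S j / 2) := by
        have : ∑ j, (A₁ i j - A₂ i j) * x j
            = ∑ j, A₁ i j * x j - ∑ j, A₂ i j * x j := by
          rw [← Finset.sum_sub_distrib]; congr 1; funext j; ring
        rw [this, hA2sum i, Finset.sum_sub_distrib, ← Finset.sum_div]
      rw [hsplit]
      calc |∑ j, (A₁ i j * x j - A₂ i j * S j / 2)|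
          ≤ ∑ j, |A₁ i j * x j - A₂ i j * S j / 2| :=
            Finset.abs_sum_le_sum_abs _ _
        _ ≤ ∑ j, (A₁ i j + A₂ i j / 2) * c := by
            apply Finset.sum_le_sum
            intro j _
            have hx1 := hxc j
            have hS1 := hSc j
            have h11 := h1 i j
            have h22 := h2 i j
            have e1 : |A₁ i j * x j| = A₁ i j * |x j| := by
              rw [abs_mul, abs_of_nonneg h11]
            have e2 : |A₂ i j * S j / 2| = A₂ i j * |S j| / 2 := by
              rw [abs_div, abs_mul, abs_of_nonneg h22]; norm_num
            calc |A₁ i j * x j - A₂ i j * S j / 2|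
                ≤ |A₁ i j * x j| + |A₂ i j * S j / 2| := abs_sub _ _
              _ = A₁ i j * |x j| + A₂ i j * |S j| / 2 := by rw [e1, e2]
              _ ≤ (A₁ i j + A₂ i j / 2) * c := by nlinarith
        _ = (∑ j, (A₁ i j + A₂ i j / 2)) * c := by rw [Finset.sum_mul]
        _ ≤ 1 * c := mul_le_mul_of_nonneg_right (hrow i) hc0
        _ = c := one_mul c
    -- top rows
    have htop : ∀ j : Fin (2 * k), 2 * |x j| ≤ c := by
      intro j
      have hik : (j : ℕ) < 3 * k := by have := j.isLt; omega
      set i : Fin (3 * k) := ⟨(j : ℕ), hik⟩ with hidef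
      have hrow0 := hx' i
      have hB : ∀ j' : Fin (2 * k), Bmat k i j' * x j'
          = if j' = j then 2 * x j' else 0 := by
        intro j'
        simp only [Bmat, Matrix.of_apply, hidef]
        rw [if_pos (show (j : ℕ) < 2 * k from j.isLt)]
        by_cases h : (j' : ℕ) = (j : ℕ)
        · rw [if_pos h, if_pos (Fin.ext h)]
        · rw [if_neg h, if_neg (fun hh => h (congrArg Fin.val hh)), zero_mul]
      have hsum : ∑ j', M i j' * x j'
          = 2 * x j + ∑ j', (A₁ i j' - A₂ i j') * x j' := by
        have e : ∀ j', M i j' * x j'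
            = Bmat k i j' * x j' + (A₁ i j' - A₂ i j') * x j' := by
          intro j'; rw [hMapp]; ring
        simp only [e]
        rw [Finset.sum_add_distrib]
        congr 1
        simp only [hB]
        rw [Finset.sum_ite_eq' Finset.univ j (fun j' => 2 * x j')]
        simp
      have heq : 2 * x j = -(∑ j', (A₁ i j' - A₂ i j') * x j') := by
        rw [hsum] at hrow0; linarith
      calc 2 * |x j| = |2 * x j| := by rw [abs_mul]; norm_num
        _ = |∑ j', (A₁ i j' - A₂ i j') * x j'| := by rw [heq, abs_neg]
        _ ≤ c := hkey i
    -- bottom rows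
    have hbot : ∀ j : Fin (2 * k), 2 * |S j| ≤ c := by
      intro j
      have hdiv : (j : ℕ) / 2 < k := by have := j.isLt; omega
      have hik : 2 * k + (j : ℕ) / 2 < 3 * k := by omega
      set i : Fin (3 * k) := ⟨2 * k + (j : ℕ) / 2, hik⟩ with hidef
      have hrow0 := hx' i
      have hB : ∀ j' : Fin (2 * k), Bmat k i j' * x j'
          = if (j' : ℕ) / 2 = (j : ℕ) / 2 then -2 * x j' else 0 := by
        intro j'
        simp only [Bmat, Matrix.of_apply, hidef]
        rw [if_neg (by omega)]
        have : 2 * k + (j : ℕ) / 2 - 2 * k = (j : ℕ) / 2 := by omega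
        rw [this]
        by_cases h : (j' : ℕ) / 2 = (j : ℕ) / 2
        · rw [if_pos h, if_pos h]
        · rw [if_neg h, if_neg h, zero_mul]
      have hsum : ∑ j', M i j' * x j'
          = -2 * S j + ∑ j', (A₁ i j' - A₂ i j') * x j' := by
        have e : ∀ j', M i j' * x j'
            = Bmat k i j' * x j' + (A₁ i j' - A₂ i j') * x j' := by
          intro j'; rw [hMapp]; ring
        simp only [e]
        rw [Finset.sum_add_distrib]
        congr 1
        simp only [hB]
        rw [← Finset.sum_filter, filter_pair k j,
          Finset.sum_pair (sig_ne k j)]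
        simp only [hSdef]
        ring
      have heq : 2 * S j = ∑ j', (A₁ i j' - A₂ i j') * x j' := by
        rw [hsum] at hrow0; linarith
      calc 2 * |S j| = |2 * S j| := by rw [abs_mul]; norm_num
        _ = |∑ j', (A₁ i j' - A₂ i j') * x j'| := by rw [heq]
        _ ≤ c := hkey i
    have hcle : c ≤ 0 := by
      rcases max_choice (|x j₁|) (|S j₂|) with h | h
      · have := htop j₁; rw [← hcdef] at *; linarith [h]
      · have := hbot j₂; rw [← hcdef] at *; linarith [h]
    have : |x j0| ≤ 0 := le_trans (hxc j0) hcle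
    have := abs_nonneg (x j0)
    have : |x j0| = 0 := le_antisymm ‹|x j0| ≤ 0› ‹0 ≤ |x j0|›
    simpa using abs_eq_zero.mp this
  have : M.rank = Module.finrank ℝ (Fin (2 * k) → ℝ) := by
    rw [Matrix.rank]
    exact LinearMap.finrank_range_of_inj hinj
  rw [this]
  simp [Module.finrank_fin_fun]
end

section
/- Let n ≥ 3. In the complete graph K_n on vertex set {0,…,n−1}, consider the cuts Δ(X) for all contiguous arcs X of the n-cycle not containing 0 (the beach of the mincuts of the cycle C_n). The characteristic vectors of these cuts in {0,1}^{C(n,2)} span all of ℝ^{C(n,2)}. -/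
open Finset
set_option linter.unusedSectionVars false
set_option maxHeartbeats 1000000

private def bvec (n : ℕ) (p q : ZMod n) : ZMod n × ZMod n → ℝ :=
  fun x => if x = (p, q) ∨ x = (q, p) then 1 else 0

private def cutv (n : ℕ) (X : Finset (ZMod n)) : ZMod n × ZMod n → ℝ :=
  fun p => if (p.1 ∈ X ∧ p.2 ∉ X) ∨ (p.2 ∈ X ∧ p.1 ∉ X) then 1 else 0

private def arcF (n i j : ℕ) : Finset (ZMod n) :=
  (Finset.Ioc i j).image (Nat.cast : ℕ → ZMod n)

section helpers
variable {n : ℕ} [NeZero n]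

private lemma cast_val (x : ZMod n) : ((x.val : ZMod n)) = x :=
  (ZMod.natCast_val x).trans (ZMod.cast_id _ _)

private lemma eq_cast_iff_val {q : ℕ} (hq : q < n) (x : ZMod n) :
    x = (q : ZMod n) ↔ x.val = q := by
  constructor
  · rintro rfl; exact ZMod.val_cast_of_lt hq
  · intro h; rw [← cast_val x, h]

private lemma mem_arcF {i j : ℕ} (hj : j < n) (x : ZMod n) :
    x ∈ arcF n i j ↔ i < x.val ∧ x.val ≤ j := by
  simp only [arcF, Finset.mem_image, Finset.mem_Ioc]
  constructor
  · rintro ⟨m, ⟨h1, h2⟩, rfl⟩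
    rw [ZMod.val_cast_of_lt (lt_of_le_of_lt h2 hj)]; exact ⟨h1, h2⟩
  · rintro ⟨h1, h2⟩
    exact ⟨x.val, ⟨h1, h2⟩, cast_val x⟩

private lemma bvec_symm (p q : ZMod n) : bvec n p q = bvec n q p := by
  funext x; simp [bvec, or_comm]

private lemma bvec_apply {p q : ℕ} (hp : p < n) (hq : q < n) (x y : ZMod n) :
    bvec n p q (x, y) =
      if (x.val = p ∧ y.val = q) ∨ (x.val = q ∧ y.val = p) then 1 else 0 := by
  simp only [bvec, Prod.ext_iff, eq_cast_iff_val hp, eq_cast_iff_val hq]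

private lemma cutv_swap (X : Finset (ZMod n)) (a b : ZMod n) :
    cutv n X (a, b) = cutv n X (b, a) := by
  simp [cutv, or_comm]

private lemma arcF_self (i : ℕ) : cutv n (arcF n i i) = 0 := by
  funext z; simp [cutv, arcF]

private lemma rect_eq {p q : ℕ} (hp1 : 1 ≤ p) (hpq : p < q) (hq : q < n) :
    (2 : ℝ) • bvec n p q =
      cutv n (arcF n (p - 1) (q - 1)) + cutv n (arcF n p q)
        - cutv n (arcF n (p - 1) q) - cutv n (arcF n p (q - 1)) := by
  funext z
  obtain ⟨x, y⟩ := z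
  have hx := ZMod.val_lt x
  have hy := ZMod.val_lt y
  simp only [Pi.smul_apply, Pi.add_apply, Pi.sub_apply, smul_eq_mul,
    bvec_apply (show p < n by omega) hq, cutv,
    mem_arcF (show q - 1 < n by omega), mem_arcF hq]
  split_ifs <;> first | (exfalso; omega) | norm_num

private lemma single_eq {q : ℕ} (hq1 : 1 ≤ q) (hq : q < n) :
    cutv n (arcF n (q - 1) q) = ∑ r ∈ (Finset.range n).erase q, bvec n q r := by
  funext z
  obtain ⟨x, y⟩ := z
  have hx := ZMod.val_lt x
  have hy := ZMod.val_lt y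
  rw [Finset.sum_apply]
  have hsummand : ∀ r ∈ (Finset.range n).erase q, bvec n q r (x, y)
      = (if x.val = q ∧ y.val = r then (1:ℝ) else 0)
        + (if y.val = q ∧ x.val = r then (1:ℝ) else 0) := by
    intro r hr
    simp only [Finset.mem_erase, Finset.mem_range] at hr
    rw [bvec_apply hq hr.2]
    split_ifs <;> first | (exfalso; omega) | norm_num
  rw [Finset.sum_congr rfl hsummand, Finset.sum_add_distrib]
  have h1 : (∑ r ∈ (Finset.range n).erase q, if x.val = q ∧ y.val = r then (1:ℝ) else 0)
      = if x.val = q ∧ ¬ (y.val = q) then 1 else 0 := by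
    by_cases hxq : x.val = q
    · simp only [hxq, true_and]
      rw [Finset.sum_ite_eq]
      simp [Finset.mem_erase, Finset.mem_range, hy]
    · simp [hxq]
  have h2 : (∑ r ∈ (Finset.range n).erase q, if y.val = q ∧ x.val = r then (1:ℝ) else 0)
      = if y.val = q ∧ ¬ (x.val = q) then 1 else 0 := by
    by_cases hyq : y.val = q
    · simp only [hyq, true_and]
      rw [Finset.sum_ite_eq]
      simp [Finset.mem_erase, Finset.mem_range, hx]
    · simp [hyq]
  rw [h1, h2]
  simp only [cutv, mem_arcF hq]
  split_ifs <;> first | (exfalso; omega) | norm_num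

end helpers

private def SS (n : ℕ) : Set (ZMod n × ZMod n → ℝ) :=
  {v : ZMod n × ZMod n → ℝ | ∃ X : Finset (ZMod n), (0 : ZMod n) ∉ X ∧
        (∃ (s : ZMod n) (l : ℕ), 0 < l ∧ l < n ∧
          X = (Finset.range l).image (fun t : ℕ => s + (t : ZMod n))) ∧
        v = fun p => if (p.1 ∈ X ∧ p.2 ∉ X) ∨ (p.2 ∈ X ∧ p.1 ∉ X) then 1 else 0}

section memb
variable {n : ℕ} [NeZero n]

private lemma cut_mem_SS {i j : ℕ} (hij : i < j) (hj : j < n) :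
    cutv n (arcF n i j) ∈ SS n := by
  refine ⟨arcF n i j, ?_, ⟨(↑(i+1) : ZMod n), j - i, by omega, by omega, ?_⟩, rfl⟩
  · rw [mem_arcF hj]
    simp [ZMod.val_zero]
  · ext x
    simp only [arcF, Finset.mem_image, Finset.mem_Ioc, Finset.mem_range]
    constructor
    · rintro ⟨m, ⟨h1, h2⟩, rfl⟩
      refine ⟨m - (i+1), by omega, ?_⟩
      rw [← Nat.cast_add]
      congr 1
      omega
    · rintro ⟨t, ht, rfl⟩
      refine ⟨i + 1 + t, ⟨by omega, by omega⟩, by push_cast; ring⟩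

private lemma cut_mem_span {i j : ℕ} (hij : i ≤ j) (hj : j < n) :
    cutv n (arcF n i j) ∈ Submodule.span ℝ (SS n) := by
  rcases eq_or_lt_of_le hij with rfl | h
  · rw [arcF_self]; exact Submodule.zero_mem _
  · exact Submodule.subset_span (cut_mem_SS h hj)

private lemma b_mem_span_pos {p q : ℕ} (hp1 : 1 ≤ p) (hpq : p < q) (hq : q < n) :
    bvec n p q ∈ Submodule.span ℝ (SS n) := by
  have h : bvec n p q = (2⁻¹ : ℝ) • ((2 : ℝ) • bvec n p q) := by
    rw [smul_smul]; norm_num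
  rw [h, rect_eq hp1 hpq hq]
  refine Submodule.smul_mem _ _ (Submodule.sub_mem _ (Submodule.sub_mem _
    (Submodule.add_mem _ ?_ ?_) ?_) ?_) <;>
    exact cut_mem_span (by omega) (by omega)

private lemma b_mem_span_ne {p q : ℕ} (hp1 : 1 ≤ p) (hq1 : 1 ≤ q) (hne : p ≠ q)
    (hp : p < n) (hq : q < n) : bvec n p q ∈ Submodule.span ℝ (SS n) := by
  rcases lt_or_gt_of_ne hne with h | h
  · exact b_mem_span_pos hp1 h hq
  · rw [bvec_symm]; exact b_mem_span_pos hq1 h hp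

private lemma b_zero_mem_span {q : ℕ} (hq1 : 1 ≤ q) (hq : q < n) :
    bvec n q (0 : ZMod n) ∈ Submodule.span ℝ (SS n) := by
  have hs := single_eq (n := n) hq1 hq
  have h0mem : (0 : ℕ) ∈ (Finset.range n).erase q := by
    simp [Finset.mem_erase, Finset.mem_range]
    omega
  rw [← Finset.add_sum_erase _ _ h0mem] at hs
  have hb : bvec n q (0 : ZMod n)
      = cutv n (arcF n (q - 1) q)
        - ∑ r ∈ (((Finset.range n).erase q).erase 0), bvec n q r := by
    rw [hs]
    push_cast
    ring
  rw [hb]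
  refine Submodule.sub_mem _ (cut_mem_span (by omega) hq) (Submodule.sum_mem _ ?_)
  intro r hr
  simp only [Finset.mem_erase, Finset.mem_range] at hr
  exact b_mem_span_ne hq1 (by omega) (by omega) hq hr.2.2

private lemma b_mem_span_all {p q : ZMod n} (hne : p ≠ q) :
    bvec n p q ∈ Submodule.span ℝ (SS n) := by
  have hvalne : p.val ≠ q.val := by
    intro h
    exact hne (by rw [← cast_val p, ← cast_val q, h])
  rw [← cast_val p, ← cast_val q]
  by_cases hp0 : p.val = 0
  · rw [hp0, Nat.cast_zero, bvec_symm]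
    exact b_zero_mem_span (by omega) (ZMod.val_lt q)
  · by_cases hq0 : q.val = 0
    · rw [hq0, Nat.cast_zero]
      exact b_zero_mem_span (by omega) (ZMod.val_lt p)
    · exact b_mem_span_ne (by omega) (by omega) hvalne (ZMod.val_lt p) (ZMod.val_lt q)

end memb

private abbrev Idx (n : ℕ) := {x : ZMod n × ZMod n // x.1.val < x.2.val}

private def Bfam (n : ℕ) : Idx n → (ZMod n × ZMod n → ℝ) := fun i => bvec n i.1.1 i.1.2

section fam
variable {n : ℕ} [NeZero n]

private lemma cutv_eq_sum (X : Finset (ZMod n)) :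
    cutv n X = ∑ i : Idx n, cutv n X i.1 • Bfam n i := by
  funext z
  rw [Finset.sum_apply]
  by_cases hz : z.1 = z.2
  · have hterm : ∀ i : Idx n, i ∈ Finset.univ → (cutv n X i.1 • Bfam n i) z = 0 := by
      rintro ⟨⟨p, q⟩, hi⟩ _
      have hi' : p.val < q.val := hi
      simp only [Pi.smul_apply, smul_eq_mul, Bfam, bvec]
      rw [if_neg, mul_zero]
      rintro (h | h)
      · have h1 : z.1 = p := by rw [h]
        have h2 : z.2 = q := by rw [h]
        have : p = q := by rw [← h1, ← h2, hz]
        rw [this] at hi'; exact lt_irrefl _ hi'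
      · have h1 : z.1 = q := by rw [h]
        have h2 : z.2 = p := by rw [h]
        have : q = p := by rw [← h1, ← h2, hz]
        rw [this] at hi'; exact lt_irrefl _ hi'
    rw [Finset.sum_eq_zero hterm]
    simp [cutv, hz]
  · have hvne : z.1.val ≠ z.2.val := by
      intro h; exact hz (by rw [← cast_val z.1, ← cast_val z.2, h])
    by_cases hlt : z.1.val < z.2.val
    · rw [Finset.sum_eq_single (⟨(z.1, z.2), hlt⟩ : Idx n)]
      · simp [Bfam, bvec]
      · rintro ⟨⟨p, q⟩, hi⟩ _ hne'
        have hi' : p.val < q.val := hi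
        simp only [Pi.smul_apply, smul_eq_mul, Bfam, bvec]
        rw [if_neg, mul_zero]
        rintro (h | h)
        · exact hne' (Subtype.ext ((Prod.mk.eta.symm.trans h).symm))
        · have h1 : z.1 = q := by rw [h]
          have h2 : z.2 = p := by rw [h]
          rw [h1, h2] at hlt; omega
      · intro h; exact absurd (Finset.mem_univ _) h
    · have hlt' : z.2.val < z.1.val := by omega
      rw [Finset.sum_eq_single (⟨(z.2, z.1), hlt'⟩ : Idx n)]
      · have hb : bvec n z.2 z.1 z = 1 := by
          have : z = (z.2, z.1) ∨ z = (z.1, z.2) := Or.inr Prod.mk.eta.symm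
          simp [bvec, this]
        have hc : cutv n X (z.2, z.1) = cutv n X z := by
          rw [cutv_swap]
        simp only [Pi.smul_apply, smul_eq_mul, Bfam, hb, mul_one]
        exact hc.symm
      · rintro ⟨⟨p, q⟩, hi⟩ _ hne'
        have hi' : p.val < q.val := hi
        simp only [Pi.smul_apply, smul_eq_mul, Bfam, bvec]
        rw [if_neg, mul_zero]
        rintro (h | h)
        · have h1 : z.1 = p := by rw [h]
          have h2 : z.2 = q := by rw [h]
          rw [h1, h2] at hlt; omega
        · have h1 : z.1 = q := by rw [h]
          have h2 : z.2 = p := by rw [h]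
          exact hne' (Subtype.ext (show ((p, q) : ZMod n × ZMod n) = (z.2, z.1) by
            rw [← h1, ← h2]))
      · intro h; exact absurd (Finset.mem_univ _) h

private lemma B_indep : LinearIndependent ℝ (Bfam n) := by
  rw [Fintype.linearIndependent_iff]
  intro g hg i
  obtain ⟨⟨p, q⟩, hpq⟩ := i
  have hpq' : p.val < q.val := hpq
  have h := congrFun hg (p, q)
  rw [Finset.sum_apply] at h
  simp only [Pi.smul_apply, smul_eq_mul, Pi.zero_apply] at h
  rw [Finset.sum_eq_single (⟨(p, q), hpq⟩ : Idx n)] at h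
  · simpa [Bfam, bvec] using h
  · rintro ⟨⟨a, b⟩, hab⟩ _ hne'
    have hab' : a.val < b.val := hab
    simp only [Bfam, bvec]
    rw [if_neg, mul_zero]
    rintro (h' | h')
    · exact hne' (Subtype.ext h'.symm)
    · have h1 : p = b := congrArg Prod.fst h'
      have h2 : q = a := congrArg Prod.snd h'
      rw [h1, h2] at hpq'; omega
  · intro h'; exact absurd (Finset.mem_univ _) h'

private lemma card_Idx : Fintype.card (Idx n) = n.choose 2 := by
  rw [Fintype.card_subtype, Finset.card_filter, ← Finset.univ_product_univ,
    Finset.sum_product]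
  have key : ∀ v : ℕ, v ≤ n → (∑ x : ZMod n, if x.val < v then 1 else 0) = v := by
    intro v hv
    have : (∑ x : ZMod n, if x.val < v then 1 else 0)
        = ∑ k ∈ Finset.range n, (if k < v then 1 else 0) := by
      refine Finset.sum_nbij' (fun x => x.val) (fun k => (k : ZMod n)) ?_ ?_ ?_ ?_ ?_
      · intro a _; exact Finset.mem_range.2 (ZMod.val_lt a)
      · intro a _; exact Finset.mem_univ _
      · intro a _; exact cast_val a
      · intro a ha; exact ZMod.val_cast_of_lt (Finset.mem_range.1 ha)
      · intro a _; rfl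
    rw [this, ← Finset.card_filter]
    have : (Finset.range n).filter (fun k => k < v) = Finset.range v := by
      ext k; simp only [Finset.mem_filter, Finset.mem_range]; omega
    rw [this, Finset.card_range]
  rw [Finset.sum_comm]
  have : ∀ y : ZMod n, (∑ x : ZMod n, if x.val < y.val then 1 else 0) = y.val :=
    fun y => key y.val (le_of_lt (ZMod.val_lt y))
  rw [Finset.sum_congr rfl (fun y _ => this y)]
  have : (∑ y : ZMod n, y.val) = ∑ k ∈ Finset.range n, k := by
    refine Finset.sum_nbij' (fun x => x.val) (fun k => (k : ZMod n)) ?_ ?_ ?_ ?_ ?_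
    · intro a _; exact Finset.mem_range.2 (ZMod.val_lt a)
    · intro a _; exact Finset.mem_univ _
    · intro a _; exact cast_val a
    · intro a ha; exact ZMod.val_cast_of_lt (Finset.mem_range.1 ha)
    · intro a _; rfl
  rw [this, Finset.sum_range_id, Nat.choose_two_right]

end fam

/-- In the complete graph on `ZMod n` (`n ≥ 3`), the characteristic vectors of the cuts whose
shores are the nonempty proper arcs of the `n`-cycle avoiding `0` span a space of dimension
`C(n,2)`. -/
theorem stmt16 (n : ℕ) (hn : 3 ≤ n) [NeZero n] :
    Module.finrank ℝ (Submodule.span ℝ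
      {v : ZMod n × ZMod n → ℝ | ∃ X : Finset (ZMod n), (0 : ZMod n) ∉ X ∧
        (∃ (s : ZMod n) (l : ℕ), 0 < l ∧ l < n ∧
          X = (Finset.range l).image (fun t : ℕ => s + (t : ZMod n))) ∧
        v = fun p => if (p.1 ∈ X ∧ p.2 ∉ X) ∨ (p.2 ∈ X ∧ p.1 ∉ X) then 1 else 0}) =
      n.choose 2 := by
  have hS : {v : ZMod n × ZMod n → ℝ | ∃ X : Finset (ZMod n), (0 : ZMod n) ∉ X ∧
        (∃ (s : ZMod n) (l : ℕ), 0 < l ∧ l < n ∧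
          X = (Finset.range l).image (fun t : ℕ => s + (t : ZMod n))) ∧
        v = fun p => if (p.1 ∈ X ∧ p.2 ∉ X) ∨ (p.2 ∈ X ∧ p.1 ∉ X) then 1 else 0} = SS n := rfl
  rw [hS]
  have hspan : Submodule.span ℝ (SS n) = Submodule.span ℝ (Set.range (Bfam n)) := by
    apply le_antisymm
    · rw [Submodule.span_le]
      rintro v ⟨X, -, -, rfl⟩
      have hv : (fun p : ZMod n × ZMod n =>
          if (p.1 ∈ X ∧ p.2 ∉ X) ∨ (p.2 ∈ X ∧ p.1 ∉ X) then (1:ℝ) else 0) = cutv n X := rfl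
      rw [SetLike.mem_coe, hv, cutv_eq_sum]
      exact Submodule.sum_mem _ fun i _ =>
        Submodule.smul_mem _ _ (Submodule.subset_span ⟨i, rfl⟩)
    · rw [Submodule.span_le]
      rintro v ⟨i, rfl⟩
      rw [SetLike.mem_coe]
      refine b_mem_span_all ?_
      intro h
      have := i.2
      rw [h] at this
      exact lt_irrefl _ this
  rw [hspan, finrank_span_eq_card B_indep, card_Idx]
end

section
/- In a faithful arborescence representation (T, φ) of the beach 𝒢 of a maximal cross-free family ℒ of cuts of a graph on [n]: the root is labeled by vertex 1 and has out-degree 1, T has exactly n−1 leaves with distinct labels from {2,…,n}, and every internal vertex is unlabeled with out-degree 2. -/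
open Finset

/-- Two finite sets overlap if their intersection and both differences are nonempty. -/
def overlap {V : Type*} [DecidableEq V] (X Y : Finset V) : Prop :=
  (X ∩ Y).Nonempty ∧ (X \ Y).Nonempty ∧ (Y \ X).Nonempty

/-- Two shores cross if all four corner sets are nonempty. -/
def crossing {V : Type*} [DecidableEq V] [Fintype V] (X Y : Finset V) : Prop :=
  (X ∩ Y).Nonempty ∧ (X \ Y).Nonempty ∧ (Y \ X).Nonempty ∧ (Xᶜ ∩ Yᶜ).Nonempty

/-- X is the shore of a cut: nonempty and proper. -/
def isCutShore {V : Type*} [Fintype V] (X : Finset V) : Prop :=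
  X.Nonempty ∧ X ≠ Finset.univ

/-- The weight of the cut Δ(X) in the weighted graph with (symmetric) weights w. -/
noncomputable def cutWeight {V : Type*} [DecidableEq V] [Fintype V]
    (w : V → V → ℝ) (X : Finset V) : ℝ :=
  (1/2) * ∑ p : V × V,
    if (p.1 ∈ X ∧ p.2 ∉ X) ∨ (p.2 ∈ X ∧ p.1 ∉ X) then w p.1 p.2 else 0

/-- Δ(X) is a minimum cut. -/
def isMinCut {V : Type*} [DecidableEq V] [Fintype V] (w : V → V → ℝ) (X : Finset V) : Prop :=
  isCutShore X ∧ ∀ Y : Finset V, isCutShore Y → cutWeight w X ≤ cutWeight w Y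

/-- The characteristic vector of the cut Δ(X) among the edges (pairs of positive weight). -/
noncomputable def cutVec {V : Type*} [DecidableEq V] [Fintype V]
    (w : V → V → ℝ) (X : Finset V) : V × V → ℝ :=
  fun p => if (((p.1 ∈ X ∧ p.2 ∉ X) ∨ (p.2 ∈ X ∧ p.1 ∉ X)) ∧ 0 < w p.1 p.2) then 1 else 0


section paths
variable {α : Type*} [DecidableEq α]

def dep (r : α) (p : α → α) (hreach : ∀ v, ∃ k, p^[k] v = r) (v : α) : ℕ :=
  Nat.find (hreach v)

theorem dep_spec (r : α) (p : α → α) (hreach : ∀ v, ∃ k, p^[k] v = r) (v : α) :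
    p^[dep r p hreach v] v = r := by unfold dep; exact Nat.find_spec (hreach v)

theorem dep_min (r : α) (p : α → α) (hreach : ∀ v, ∃ k, p^[k] v = r) {v : α}
    {i : ℕ} (hi : i < dep r p hreach v) : p^[i] v ≠ r := by
  unfold dep at hi; exact Nat.find_min (hreach v) hi

theorem dep_le (r : α) (p : α → α) (hreach : ∀ v, ∃ k, p^[k] v = r) {v : α}
    {k : ℕ} (hk : p^[k] v = r) : dep r p hreach v ≤ k := by
  unfold dep; exact Nat.find_le hk

variable {r : α} {p : α → α} {P : α → Finset α}

theorem dep_eq_zero_iff (hreach : ∀ v, ∃ k, p^[k] v = r) {v : α} :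
    dep r p hreach v = 0 ↔ v = r := by
  constructor
  · intro h
    have := dep_spec r p hreach v
    rwa [h, Function.iterate_zero_apply] at this
  · intro h
    exact Nat.le_zero.mp (dep_le r p hreach (by simp [h]))

theorem iterate_of_dep_le (hp : p r = r) (hreach : ∀ v, ∃ k, p^[k] v = r) {v : α} {k : ℕ}
    (hk : dep r p hreach v ≤ k) : p^[k] v = r := by
  have : k = (k - dep r p hreach v) + dep r p hreach v := (Nat.sub_add_cancel hk).symm
  rw [this, Function.iterate_add_apply, dep_spec r p hreach v, Function.iterate_fixed hp]

theorem dep_iterate (hreach : ∀ v, ∃ k, p^[k] v = r) {v : α} {i : ℕ}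
    (hi : i ≤ dep r p hreach v) :
    dep r p hreach (p^[i] v) = dep r p hreach v - i := by
  apply le_antisymm
  · apply dep_le
    rw [← Function.iterate_add_apply, Nat.sub_add_cancel hi, dep_spec]
  · by_contra hlt
    push_neg at hlt
    have h2 : p^[dep r p hreach (p^[i] v) + i] v = r := by
      rw [Function.iterate_add_apply]
      exact dep_spec _ _ _ _
    have := dep_le r p hreach h2
    omega

theorem P_eq (hreach : ∀ v, ∃ k, p^[k] v = r)
    (hP0 : P r = ∅) (hPs : ∀ v, v ≠ r → P v = insert v (P (p v))) (v : α) :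
    P v = (Finset.range (dep r p hreach v)).image (fun i => p^[i] v) := by
  generalize hd : dep r p hreach v = d
  induction d using Nat.strong_induction_on generalizing v with
  | _ d ih =>
    rcases eq_or_ne v r with hv | hv
    · subst hv
      have hz : dep v p hreach v = 0 := Nat.le_zero.mp (dep_le v p hreach (k := 0) (by simp))
      rw [← hd, hz]
      simp [hP0]
    · have hd0 : d ≠ 0 := fun h => hv ((dep_eq_zero_iff hreach).mp (h ▸ hd))
      have hdp : dep r p hreach (p v) = d - 1 := by
        have h1 : (1 : ℕ) ≤ dep r p hreach v := by
          rcases Nat.eq_zero_or_pos (dep r p hreach v) with h | h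
          · exact absurd ((dep_eq_zero_iff hreach).mp h) hv
          · exact h
        have := dep_iterate hreach (v := v) (i := 1) h1
        simpa [hd] using this
      rw [hPs v hv, ih (d-1) (by omega) (p v) hdp]
      ext x
      simp only [Finset.mem_insert, Finset.mem_image, Finset.mem_range]
      constructor
      · rintro (rfl | ⟨i, hi, rfl⟩)
        · exact ⟨0, by omega, rfl⟩
        · exact ⟨i + 1, by omega, by rw [Function.iterate_succ_apply]⟩
      · rintro ⟨i, hi, rfl⟩
        rcases Nat.eq_zero_or_pos i with rfl | hpos
        · left; simp
        · right
          exact ⟨i - 1, by omega, by rw [← Function.iterate_succ_apply]; congr 1; omega⟩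

theorem mem_P_iff (hreach : ∀ v, ∃ k, p^[k] v = r)
    (hP0 : P r = ∅) (hPs : ∀ v, v ≠ r → P v = insert v (P (p v))) {x v : α} :
    x ∈ P v ↔ ∃ i, i < dep r p hreach v ∧ p^[i] v = x := by
  rw [P_eq hreach hP0 hPs v]
  simp only [Finset.mem_image, Finset.mem_range]

end paths

section derived
variable {α : Type*} [DecidableEq α] {r : α} {p : α → α} {P : α → Finset α}
variable (hp : p r = r) (hreach : ∀ v, ∃ k, p^[k] v = r)
variable (hP0 : P r = ∅) (hPs : ∀ v, v ≠ r → P v = insert v (P (p v)))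

theorem iterate_inj (hreach : ∀ v, ∃ k, p^[k] v = r) {v : α} {i j : ℕ}
    (hi : i ≤ dep r p hreach v) (hj : j ≤ dep r p hreach v)
    (h : p^[i] v = p^[j] v) : i = j := by
  have h1 := dep_iterate hreach hi
  have h2 := dep_iterate hreach hj
  rw [h] at h1
  omega

include hreach hP0 hPs

theorem mem_P_ne_root {x v : α} (h : x ∈ P v) : x ≠ r := by
  obtain ⟨i, hi, rfl⟩ := (mem_P_iff hreach hP0 hPs).mp h
  exact dep_min r p hreach hi

theorem self_mem_P {v : α} (h : v ≠ r) : v ∈ P v := by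
  rw [mem_P_iff hreach hP0 hPs]
  refine ⟨0, ?_, rfl⟩
  rcases Nat.eq_zero_or_pos (dep r p hreach v) with h0 | h0
  · exact absurd ((dep_eq_zero_iff hreach).mp h0) h
  · exact h0

theorem P_subset_of_mem {x v : α} (h : x ∈ P v) : P x ⊆ P v := by
  obtain ⟨i, hi, rfl⟩ := (mem_P_iff hreach hP0 hPs).mp h
  intro y hy
  obtain ⟨j, hj, rfl⟩ := (mem_P_iff hreach hP0 hPs).mp hy
  rw [dep_iterate hreach (le_of_lt hi)] at hj
  rw [mem_P_iff hreach hP0 hPs, ← Function.iterate_add_apply]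
  exact ⟨j + i, by omega, rfl⟩

theorem parent_mem (hp : p r = r) {x v : α} (h : x ∈ P v) (hx : p x ≠ r) : p x ∈ P v := by
  obtain ⟨i, hi, rfl⟩ := (mem_P_iff hreach hP0 hPs).mp h
  rw [mem_P_iff hreach hP0 hPs]
  refine ⟨i + 1, ?_, (Function.iterate_succ_apply' p i v)⟩
  by_contra hc
  push_neg at hc
  refine hx ?_
  rw [← Function.iterate_succ_apply' p i v]
  exact iterate_of_dep_le hp hreach hc

theorem P_comparable {x y v : α} (hx : x ∈ P v) (hy : y ∈ P v) :
    x ∈ P y ∨ y ∈ P x := by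
  obtain ⟨i, hi, rfl⟩ := (mem_P_iff hreach hP0 hPs).mp hx
  obtain ⟨j, hj, rfl⟩ := (mem_P_iff hreach hP0 hPs).mp hy
  rcases le_total i j with hle | hle
  · right
    rw [mem_P_iff hreach hP0 hPs]
    refine ⟨j - i, ?_, ?_⟩
    · rw [dep_iterate hreach (le_of_lt hi)]; omega
    · rw [← Function.iterate_add_apply]; congr 1; omega
  · left
    rw [mem_P_iff hreach hP0 hPs]
    refine ⟨i - j, ?_, ?_⟩
    · rw [dep_iterate hreach (le_of_lt hj)]; omega
    · rw [← Function.iterate_add_apply]; congr 1; omega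

theorem unique_child_on_path {x y v : α} (hx : x ∈ P v) (hy : y ∈ P v)
    (h : p x = p y) : x = y := by
  obtain ⟨i, hi, rfl⟩ := (mem_P_iff hreach hP0 hPs).mp hx
  obtain ⟨j, hj, rfl⟩ := (mem_P_iff hreach hP0 hPs).mp hy
  rw [← Function.iterate_succ_apply' p i v, ← Function.iterate_succ_apply' p j v] at h
  have := iterate_inj hreach (v := v) (i := i+1) (j := j+1) (by omega) (by omega) h
  have : i = j := by omega
  rw [this]

theorem not_parent_of_mem {x v : α} (hx : x ∈ P v) (h : p x = v) : False := by
  obtain ⟨i, hi, rfl⟩ := (mem_P_iff hreach hP0 hPs).mp hx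
  rw [← Function.iterate_succ_apply' p i v] at h
  have h0 : p^[0] v = v := rfl
  have := iterate_inj hreach (v := v) (i := i+1) (j := 0) (by omega) (by omega) (h.trans h0.symm)
  omega

theorem P_empty_iff {v : α} : P v = ∅ ↔ v = r := by
  constructor
  · intro h
    by_contra hv
    have := self_mem_P hreach hP0 hPs hv
    rw [h] at this
    exact absurd this (Finset.notMem_empty v)
  · intro h; rw [h, hP0]

end derived

theorem crossing_compl_right {V : Type*} [DecidableEq V] [Fintype V] (X Y : Finset V) :
    crossing X Yᶜ ↔ crossing X Y := by
  constructor <;>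
  · rintro ⟨⟨a, ha⟩, ⟨b, hb⟩, ⟨c, hc⟩, ⟨d, hd⟩⟩
    simp only [Finset.mem_inter, Finset.mem_sdiff, Finset.mem_compl, not_not] at ha hb hc hd
    refine ⟨⟨b, ?_⟩, ⟨a, ?_⟩, ⟨d, ?_⟩, ⟨c, ?_⟩⟩ <;>
      simp only [Finset.mem_inter, Finset.mem_sdiff, Finset.mem_compl, not_not] <;> tauto

/-- Structure of a faithful arborescence representation of the beach of a maximal cross-free
family `L` of cuts of a graph on `n` vertices.  The arborescence is encoded by a parent map
`p` with root `r`; the edge into a non-root vertex `v` is identified with `v`, and `P v` is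
the set of edges on the path from the root to `v`, so the set represented by the edge `v` is
`{u | v ∈ P (φ u)}`.  Conclusions: the root is labeled by the distinguished vertex `v₁` and
has out-degree 1; the labels are distinct, every vertex other than `v₁` labels a leaf and
every leaf is so labeled (hence there are exactly `n - 1` leaves); and every internal vertex
is unlabeled with out-degree 2. -/
theorem stmt19 {V α : Type*} [DecidableEq V] [Fintype V] [DecidableEq α] [Fintype α]
    (n : ℕ) (hn : 2 ≤ n) (hcard : Fintype.card V = n) (v₁ : V)
    (L : Finset (Finset V))
    (hshore : ∀ X ∈ L, isCutShore X)
    (hdist : ∀ X ∈ L, ∀ Y ∈ L, X ≠ Y → Y ≠ Xᶜ)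
    (hcrossfree : ∀ X ∈ L, ∀ Y ∈ L, ¬ crossing X Y)
    (hmaximal : ∀ X : Finset V, isCutShore X → X ∉ L → Xᶜ ∉ L → ∃ Y ∈ L, crossing X Y)
    (r : α) (p : α → α) (φ : V → α) (P : α → Finset α)
    (hp : p r = r) (hreach : ∀ v, ∃ k, p^[k] v = r)
    (hP0 : P r = ∅) (hPs : ∀ v, v ≠ r → P v = insert v (P (p v)))
    (hrep : ∀ v : α, v ≠ r →
      (Finset.univ.filter (fun u : V => v ∈ P (φ u))) ∈
        L.image (fun X => if v₁ ∈ X then Xᶜ else X))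
    (hrep' : ∀ X ∈ L.image (fun X => if v₁ ∈ X then Xᶜ else X),
      ∃ v : α, v ≠ r ∧ X = Finset.univ.filter (fun u : V => v ∈ P (φ u)))
    (hfaithful : ∀ v v' : α, v ≠ r → v' ≠ r →
      (Finset.univ.filter (fun u : V => v ∈ P (φ u))) =
        (Finset.univ.filter (fun u : V => v' ∈ P (φ u))) → v = v') :
    φ v₁ = r ∧
    (Finset.univ.filter (fun v : α => p v = r ∧ v ≠ r)).card = 1 ∧
    Function.Injective φ ∧
    (∀ u : V, u ≠ v₁ → φ u ≠ r ∧ ¬ ∃ v' : α, p v' = φ u ∧ v' ≠ r) ∧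
    (∀ v : α, v ≠ r → (¬ ∃ v' : α, p v' = v ∧ v' ≠ r) → ∃ u : V, u ≠ v₁ ∧ φ u = v) ∧
    (Finset.univ.filter
      (fun v : α => v ≠ r ∧ ¬ ∃ v' : α, p v' = v ∧ v' ≠ r)).card = n - 1 ∧
    (∀ v : α, v ≠ r → (∃ v' : α, p v' = v ∧ v' ≠ r) →
      (¬ ∃ u : V, φ u = v) ∧
      (Finset.univ.filter (fun v' : α => p v' = v ∧ v' ≠ r)).card = 2) := by
  classical
  have hcardV : (Finset.univ : Finset V).card = n := by simpa using hcard
  set S : α → Finset V := fun v => Finset.univ.filter (fun u : V => v ∈ P (φ u)) with hSdef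
  have hrepS : ∀ v : α, v ≠ r → S v ∈ L.image (fun X => if v₁ ∈ X then Xᶜ else X) := hrep
  have hrep'S : ∀ X ∈ L.image (fun X => if v₁ ∈ X then Xᶜ else X),
      ∃ v : α, v ≠ r ∧ X = S v := hrep'
  have hfaithS : ∀ v v' : α, v ≠ r → v' ≠ r → S v = S v' → v = v' := hfaithful
  have hmemS : ∀ (v : α) (u : V), u ∈ S v ↔ v ∈ P (φ u) := by intro v u; simp [hSdef]
  have hnotv1 : ∀ v : α, v ≠ r → v₁ ∉ S v := by
    intro v hv hmem
    obtain ⟨X, hX, hXe⟩ := Finset.mem_image.mp (hrepS v hv)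
    rw [← hXe] at hmem
    by_cases h : v₁ ∈ X
    · rw [if_pos h] at hmem; exact (Finset.mem_compl.mp hmem) h
    · rw [if_neg h] at hmem; exact h hmem
  have hne : ∀ v : α, v ≠ r → (S v).Nonempty := by
    intro v hv
    obtain ⟨X, hX, hXe⟩ := Finset.mem_image.mp (hrepS v hv)
    obtain ⟨hXne, hXuniv⟩ := hshore X hX
    rw [← hXe]
    by_cases h : v₁ ∈ X
    · rw [if_pos h, Finset.nonempty_iff_ne_empty]
      intro hc
      exact hXuniv ((Finset.compl_eq_empty_iff X).mp hc)
    · rwa [if_neg h]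
  have huv1 : ∀ (v : α) (u : V), v ≠ r → u ∈ S v → u ≠ v₁ := by
    rintro v u hv hu rfl
    exact hnotv1 v hv hu
  have hA : φ v₁ = r := by
    by_contra h
    exact hnotv1 (φ v₁) h ((hmemS _ _).mpr (self_mem_P hreach hP0 hPs h))
  have himage : ∀ X : Finset V, isCutShore X → v₁ ∉ X → (∀ Y ∈ L, ¬ crossing X Y) →
      ∃ v : α, v ≠ r ∧ X = S v := by
    intro X hcs hv1 hnc
    by_cases h1 : X ∈ L
    · exact hrep'S X (Finset.mem_image.mpr ⟨X, h1, by rw [if_neg hv1]⟩)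
    by_cases h2 : Xᶜ ∈ L
    · refine hrep'S X (Finset.mem_image.mpr ⟨Xᶜ, h2, ?_⟩)
      rw [if_pos (Finset.mem_compl.mpr hv1), compl_compl]
    · obtain ⟨Y, hY, hcr⟩ := hmaximal X hcs h1 h2
      exact absurd hcr (hnc Y hY)
  have hsingle : ∀ u : V, u ≠ v₁ → ∃ v : α, v ≠ r ∧ ({u} : Finset V) = S v := by
    intro u hu
    apply himage
    · refine ⟨⟨u, Finset.mem_singleton_self u⟩, ?_⟩
      intro h
      have : v₁ ∈ ({u} : Finset V) := h ▸ Finset.mem_univ v₁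
      exact hu (Finset.mem_singleton.mp this).symm
    · intro h; exact hu (Finset.mem_singleton.mp h).symm
    · rintro Y hY ⟨⟨a, ha⟩, ⟨b, hb⟩, -, -⟩
      rw [Finset.mem_inter, Finset.mem_singleton] at ha
      rw [Finset.mem_sdiff, Finset.mem_singleton] at hb
      obtain ⟨rfl, haY⟩ := ha
      obtain ⟨rfl, hbY⟩ := hb
      exact hbY haY
  obtain ⟨vs, hvsr, hvsS⟩ : ∃ v : α, v ≠ r ∧ ({v₁}ᶜ : Finset V) = S v := by
    apply himage
    · refine ⟨?_, ?_⟩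
      · obtain ⟨u, hu⟩ := Fintype.exists_ne_of_one_lt_card (by omega : 1 < Fintype.card V) v₁
        exact ⟨u, Finset.mem_compl.mpr (by simpa using hu)⟩
      · intro h
        have : v₁ ∈ ({v₁}ᶜ : Finset V) := h ▸ Finset.mem_univ v₁
        simp at this
    · simp
    · rintro Y hY ⟨-, -, ⟨c, hc⟩, ⟨d, hd⟩⟩
      simp only [Finset.mem_sdiff, Finset.mem_inter, Finset.mem_compl, Finset.mem_singleton,
        not_not, compl_compl] at hc hd
      obtain ⟨hcY, rfl⟩ := hc
      obtain ⟨rfl, hdY⟩ := hd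
      exact hdY hcY
  have hbig : ∀ u : V, u ≠ v₁ → vs ∈ P (φ u) := by
    intro u hu
    have : u ∈ S vs := by
      rw [← hvsS]
      simpa using hu
    exact (hmemS _ _).mp this
  have hsing' : ∀ u : V, u ≠ v₁ → ∃ v : α, v ≠ r ∧ v ∈ P (φ u) ∧ S v = {u} := by
    intro u hu
    obtain ⟨v, hv, hvS⟩ := hsingle u hu
    exact ⟨v, hv, (hmemS v u).mp (hvS ▸ Finset.mem_singleton_self u), hvS.symm⟩
  have hphir : ∀ u : V, u ≠ v₁ → φ u ≠ r := by
    intro u hu h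
    obtain ⟨v, hv, hvP, -⟩ := hsing' u hu
    rw [h, hP0] at hvP
    exact absurd hvP (Finset.notMem_empty v)
  have hinj : Function.Injective φ := by
    intro a b hab
    by_contra hne'
    rcases eq_or_ne a v₁ with rfl | ha
    · exact hphir b (fun h => hne' h.symm) (hab.symm.trans hA)
    · obtain ⟨v, hv, hvP, hvS⟩ := hsing' a ha
      have : b ∈ S v := (hmemS v b).mpr (hab ▸ hvP)
      rw [hvS] at this
      exact hne' (Finset.mem_singleton.mp this).symm
  have hD : ∀ u : V, u ≠ v₁ → φ u ≠ r ∧ ¬∃ v' : α, p v' = φ u ∧ v' ≠ r := by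
    intro u hu
    refine ⟨hphir u hu, ?_⟩
    rintro ⟨v', hpv', hv'r⟩
    obtain ⟨vu, hvur, hvuP, hvuS⟩ := hsing' u hu
    have hsub : S v' ⊆ {u} := by
      intro w hw
      have hw' : v' ∈ P (φ w) := (hmemS _ _).mp hw
      have hφu : φ u ∈ P (φ w) := by
        have := parent_mem hreach hP0 hPs hp hw' (hpv' ▸ hphir u hu)
        rwa [hpv'] at this
      have hvuw : vu ∈ P (φ w) := P_subset_of_mem hreach hP0 hPs hφu hvuP
      have : w ∈ S vu := (hmemS _ _).mpr hvuw
      rwa [hvuS] at this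
    have hSv' : S v' = {u} := by
      obtain ⟨w, hw⟩ := hne v' hv'r
      apply Finset.Subset.antisymm hsub
      intro x hx
      rw [Finset.mem_singleton] at hx
      subst hx
      have hwu := Finset.mem_singleton.mp (hsub hw)
      rwa [hwu] at hw
    have hv'vu : v' = vu := hfaithS v' vu hv'r hvur (hSv'.trans hvuS.symm)
    subst hv'vu
    exact not_parent_of_mem hreach hP0 hPs hvuP hpv'
  have hE : ∀ v : α, v ≠ r → (¬∃ v' : α, p v' = v ∧ v' ≠ r) → ∃ u : V, u ≠ v₁ ∧ φ u = v := by
    intro v hv hleaf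
    obtain ⟨u, hu⟩ := hne v hv
    have hune : u ≠ v₁ := huv1 v u hv hu
    have hvP : v ∈ P (φ u) := (hmemS _ _).mp hu
    obtain ⟨i, hi, hieq⟩ := (mem_P_iff hreach hP0 hPs).mp hvP
    rcases Nat.eq_zero_or_pos i with rfl | hpos
    · exact ⟨u, hune, hieq⟩
    · exfalso
      apply hleaf
      refine ⟨p^[i-1] (φ u), ?_, dep_min r p hreach (by omega : i - 1 < dep r p hreach (φ u))⟩
      rw [← Function.iterate_succ_apply' p (i-1) (φ u)]
      have hii : (i - 1).succ = i := by omega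
      rw [hii]
      exact hieq
  -- the root child
  have hd1 : 1 ≤ dep r p hreach vs :=
    Nat.pos_of_ne_zero (fun h => hvsr ((dep_eq_zero_iff hreach).mp h))
  have hcsP : p^[dep r p hreach vs - 1] vs ∈ P vs :=
    (mem_P_iff hreach hP0 hPs).mpr ⟨dep r p hreach vs - 1, by omega, rfl⟩
  have hcsr : p^[dep r p hreach vs - 1] vs ≠ r := dep_min r p hreach (by omega)
  have hcsp : p (p^[dep r p hreach vs - 1] vs) = r := by
    rw [← Function.iterate_succ_apply' p (dep r p hreach vs - 1) vs]
    have hii : (dep r p hreach vs - 1).succ = dep r p hreach vs := by omega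
    rw [hii]
    exact dep_spec r p hreach vs
  have hBset : Finset.univ.filter (fun v : α => p v = r ∧ v ≠ r)
      = {p^[dep r p hreach vs - 1] vs} := by
    ext c
    simp only [Finset.mem_filter, Finset.mem_univ, true_and, Finset.mem_singleton]
    constructor
    · rintro ⟨hc1, hc2⟩
      obtain ⟨u, hu⟩ := hne c hc2
      have hcP : c ∈ P (φ u) := (hmemS _ _).mp hu
      have hvsP : vs ∈ P (φ u) := hbig u (huv1 c u hc2 hu)
      have hcsP' : p^[dep r p hreach vs - 1] vs ∈ P (φ u) :=
        P_subset_of_mem hreach hP0 hPs hvsP hcsP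
      exact unique_child_on_path hreach hP0 hPs hcP hcsP' (hc1.trans hcsp.symm)
    · rintro rfl
      exact ⟨hcsp, hcsr⟩
  have hFset : (Finset.univ.erase v₁).image φ
      = Finset.univ.filter (fun v : α => v ≠ r ∧ ¬∃ v' : α, p v' = v ∧ v' ≠ r) := by
    ext v
    simp only [Finset.mem_image, Finset.mem_erase, Finset.mem_filter, Finset.mem_univ, true_and,
      and_true]
    constructor
    · rintro ⟨u, hu, rfl⟩
      exact hD u hu
    · rintro ⟨hv, hleaf⟩
      obtain ⟨u, hu, hφ⟩ := hE v hv hleaf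
      exact ⟨u, hu, hφ⟩
  have hF : (Finset.univ.filter
      (fun v : α => v ≠ r ∧ ¬∃ v' : α, p v' = v ∧ v' ≠ r)).card = n - 1 := by
    rw [← hFset, Finset.card_image_of_injective _ hinj,
      Finset.card_erase_of_mem (Finset.mem_univ v₁), hcardV]
  -- general structural facts
  have hsubS : ∀ e f : α, f ∈ P e → S e ⊆ S f := by
    intro e f hf u hu
    exact (hmemS f u).mpr (P_subset_of_mem hreach hP0 hPs ((hmemS e u).mp hu) hf)
  have hdisj : ∀ c c' : α, p c = p c' → c ≠ c' → ∀ u : V, u ∈ S c → u ∈ S c' → False := by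
    intro c c' hpp hne'' u hu hu'
    exact hne'' (unique_child_on_path hreach hP0 hPs ((hmemS c u).mp hu) ((hmemS c' u).mp hu') hpp)
  have hG : ∀ v : α, v ≠ r → (∃ v' : α, p v' = v ∧ v' ≠ r) →
      (¬∃ u : V, φ u = v) ∧
      (Finset.univ.filter (fun v' : α => p v' = v ∧ v' ≠ r)).card = 2 := by
    intro v hv hch
    obtain ⟨c₀, hc₀p, hc₀r⟩ := hch
    have hnol : ¬∃ u : V, φ u = v := by
      rintro ⟨u, rfl⟩
      rcases eq_or_ne u v₁ with rfl | hu
      · exact hv hA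
      · exact (hD u hu).2 ⟨c₀, hc₀p, hc₀r⟩
    refine ⟨hnol, ?_⟩
    have hchsub : ∀ c : α, p c = v → c ≠ r → S c ⊆ S v := by
      intro c hcp hcr u hu
      have := parent_mem hreach hP0 hPs hp ((hmemS c u).mp hu) (hcp ▸ hv)
      rw [hcp] at this
      exact (hmemS v u).mpr this
    have hfindchild : ∀ w : α, v ∈ P w → v ≠ w → ∃ c, p c = v ∧ c ≠ r ∧ c ∈ P w := by
      intro w hvw hwv
      obtain ⟨i, hi, hieq⟩ := (mem_P_iff hreach hP0 hPs).mp hvw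
      have hipos : 0 < i := by
        rcases Nat.eq_zero_or_pos i with rfl | h
        · exact absurd hieq.symm hwv
        · exact h
      refine ⟨p^[i-1] w, ?_, dep_min r p hreach (by omega),
        (mem_P_iff hreach hP0 hPs).mpr ⟨i-1, by omega, rfl⟩⟩
      rw [← Function.iterate_succ_apply' p (i-1) w]
      have hii : (i - 1).succ = i := by omega
      rw [hii]
      exact hieq
    have htwo : ∃ c', p c' = v ∧ c' ≠ r ∧ c' ≠ c₀ := by
      by_contra hone
      push_neg at hone
      have hSeq : S v = S c₀ := by
        apply Finset.Subset.antisymm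
        · intro u hu
          have hvP : v ∈ P (φ u) := (hmemS v u).mp hu
          obtain ⟨c, hcp, hcr, hcP⟩ := hfindchild (φ u) hvP (fun h => hnol ⟨u, h.symm⟩)
          rw [hone c hcp hcr] at hcP
          exact (hmemS c₀ u).mpr hcP
        · exact hchsub c₀ hc₀p hc₀r
      have hvc : v = c₀ := hfaithS v c₀ hv hc₀r hSeq
      have hvv : p v = v := by rw [← hvc] at hc₀p; exact hc₀p
      have : v = r := by
        obtain ⟨k, hk⟩ := hreach v
        rwa [Function.iterate_fixed hvv k] at hk
      exact hv this
    obtain ⟨c₁, hc₁p, hc₁r, hc₁ne⟩ := htwo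
    have hnothird : ∀ c₂ : α, p c₂ = v → c₂ ≠ r → c₂ = c₀ ∨ c₂ = c₁ := by
      intro c₂ hc₂p hc₂r
      by_contra hc2
      push_neg at hc2
      obtain ⟨h20, h21⟩ := hc2
      obtain ⟨u₀, hu₀⟩ := hne c₀ hc₀r
      obtain ⟨u₁, hu₁⟩ := hne c₁ hc₁r
      obtain ⟨u₂, hu₂⟩ := hne c₂ hc₂r
      have hXcs : isCutShore (S c₀ ∪ S c₁) := by
        refine ⟨⟨u₀, Finset.mem_union_left _ hu₀⟩, ?_⟩
        intro h
        have hmm : v₁ ∈ S c₀ ∪ S c₁ := h ▸ Finset.mem_univ v₁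
        rcases Finset.mem_union.mp hmm with h' | h'
        · exact hnotv1 c₀ hc₀r h'
        · exact hnotv1 c₁ hc₁r h'
      have hv1X : v₁ ∉ S c₀ ∪ S c₁ := by
        intro h
        rcases Finset.mem_union.mp h with h' | h'
        · exact hnotv1 c₀ hc₀r h'
        · exact hnotv1 c₁ hc₁r h'
      have hXsubv : S c₀ ∪ S c₁ ⊆ S v := by
        intro u hu
        rcases Finset.mem_union.mp hu with h' | h'
        · exact hchsub c₀ hc₀p hc₀r h'
        · exact hchsub c₁ hc₁p hc₁r h'
      have hnc : ∀ Y ∈ L, ¬ crossing (S c₀ ∪ S c₁) Y := by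
        intro Y hY
        obtain ⟨e, her, heS⟩ := hrep'S _ (Finset.mem_image.mpr ⟨Y, hY, rfl⟩)
        have key : ¬ crossing (S c₀ ∪ S c₁) (S e) := by
          by_cases hve : v ∈ P e
          · rcases eq_or_ne e v with rfl | hev
            · rintro ⟨-, ⟨b, hb⟩, -, -⟩
              rw [Finset.mem_sdiff] at hb
              exact hb.2 (hXsubv hb.1)
            · obtain ⟨c, hcp, hcr, hcPe⟩ := hfindchild e hve (Ne.symm hev)
              have hSec : S e ⊆ S c := hsubS e c hcPe
              rcases eq_or_ne c c₀ with rfl | h0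
              · rintro ⟨-, -, ⟨b, hb⟩, -⟩
                rw [Finset.mem_sdiff] at hb
                exact hb.2 (Finset.mem_union_left _ (hSec hb.1))
              rcases eq_or_ne c c₁ with rfl | h1
              · rintro ⟨-, -, ⟨b, hb⟩, -⟩
                rw [Finset.mem_sdiff] at hb
                exact hb.2 (Finset.mem_union_right _ (hSec hb.1))
              · rintro ⟨⟨a, ha⟩, -, -, -⟩
                rw [Finset.mem_inter] at ha
                obtain ⟨haX, hae⟩ := ha
                have hac : a ∈ S c := hSec hae
                rcases Finset.mem_union.mp haX with h' | h'
                · exact hdisj c c₀ (hcp.trans hc₀p.symm) h0 a hac h'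
                · exact hdisj c c₁ (hcp.trans hc₁p.symm) h1 a hac h'
          · by_cases hev : e ∈ P v
            · have hSve : S v ⊆ S e := hsubS v e hev
              rintro ⟨-, ⟨b, hb⟩, -, -⟩
              rw [Finset.mem_sdiff] at hb
              exact hb.2 (hSve (hXsubv hb.1))
            · rintro ⟨⟨a, ha⟩, -, -, -⟩
              rw [Finset.mem_inter] at ha
              obtain ⟨haX, hae⟩ := ha
              have hav : a ∈ S v := hXsubv haX
              rcases P_comparable hreach hP0 hPs ((hmemS e a).mp hae) ((hmemS v a).mp hav)
                with h | h
              · exact hev h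
              · exact hve h
        by_cases hvy : v₁ ∈ Y
        · rw [if_pos hvy] at heS
          intro hcr
          rw [← heS] at key
          exact key ((crossing_compl_right _ Y).mpr hcr)
        · rw [if_neg hvy] at heS
          rw [← heS] at key
          exact key
      obtain ⟨e₀, he₀r, he₀S⟩ := himage (S c₀ ∪ S c₁) hXcs hv1X hnc
      have hu₀X : u₀ ∈ S e₀ := by rw [← he₀S]; exact Finset.mem_union_left _ hu₀
      have hc₀Pu : c₀ ∈ P (φ u₀) := (hmemS _ _).mp hu₀
      have he₀Pu : e₀ ∈ P (φ u₀) := (hmemS _ _).mp hu₀X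
      rcases eq_or_ne e₀ c₀ with rfl | hec
      · have hmm : u₁ ∈ S e₀ := by rw [← he₀S]; exact Finset.mem_union_right _ hu₁
        exact hdisj c₁ e₀ (hc₁p.trans hc₀p.symm) hc₁ne u₁ hu₁ hmm
      rcases P_comparable hreach hP0 hPs he₀Pu hc₀Pu with h | h
      · -- e₀ ∈ P c₀
        rw [hPs c₀ hc₀r] at h
        rcases Finset.mem_insert.mp h with h' | h'
        · exact hec h'
        · rw [hc₀p] at h'
          have hmm : u₂ ∈ S c₀ ∪ S c₁ := by
            rw [he₀S]
            exact hsubS v e₀ h' (hchsub c₂ hc₂p hc₂r hu₂)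
          rcases Finset.mem_union.mp hmm with h'' | h''
          · exact hdisj c₂ c₀ (hc₂p.trans hc₀p.symm) h20 u₂ hu₂ h''
          · exact hdisj c₂ c₁ (hc₂p.trans hc₁p.symm) h21 u₂ hu₂ h''
      · -- c₀ ∈ P e₀
        have hvPe : v ∈ P e₀ := by
          have := parent_mem hreach hP0 hPs hp h (hc₀p ▸ hv)
          rwa [hc₀p] at this
        rcases eq_or_ne e₀ v with rfl | hev
        · have hmm : u₂ ∈ S c₀ ∪ S c₁ := by
            rw [he₀S]
            exact hchsub c₂ hc₂p hc₂r hu₂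
          rcases Finset.mem_union.mp hmm with h'' | h''
          · exact hdisj c₂ c₀ (hc₂p.trans hc₀p.symm) h20 u₂ hu₂ h''
          · exact hdisj c₂ c₁ (hc₂p.trans hc₁p.symm) h21 u₂ hu₂ h''
        · obtain ⟨c, hcp, hcr, hcPe⟩ := hfindchild e₀ hvPe (Ne.symm hev)
          have hXc : S c₀ ∪ S c₁ ⊆ S c := by
            rw [he₀S]
            exact hsubS e₀ c hcPe
          rcases eq_or_ne c c₀ with rfl | h0
          · exact hdisj c₁ c (hc₁p.trans hcp.symm) hc₁ne u₁ hu₁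
              (hXc (Finset.mem_union_right _ hu₁))
          rcases eq_or_ne c c₁ with rfl | h1
          · exact hdisj c₀ c (hc₀p.trans hcp.symm) (fun hh => hc₁ne hh.symm) u₀ hu₀
              (hXc (Finset.mem_union_left _ hu₀))
          · exact hdisj c₀ c (hc₀p.trans hcp.symm) (fun hh => h0 hh.symm) u₀ hu₀
              (hXc (Finset.mem_union_left _ hu₀))
    have hset : Finset.univ.filter (fun v' : α => p v' = v ∧ v' ≠ r) = {c₀, c₁} := by
      ext c
      simp only [Finset.mem_filter, Finset.mem_univ, true_and, Finset.mem_insert,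
        Finset.mem_singleton]
      constructor
      · rintro ⟨h1, h2⟩
        exact hnothird c h1 h2
      · rintro (rfl | rfl)
        exacts [⟨hc₀p, hc₀r⟩, ⟨hc₁p, hc₁r⟩]
    rw [hset]
    exact Finset.card_pair (Ne.symm hc₁ne)
  exact ⟨hA, by rw [hBset]; exact Finset.card_singleton _, hinj, hD, hE, hF, hG⟩
end
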